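/- Let n ≥ 1, c ∈ ℝⁿ and ρ > 0, and let N = #(ℤⁿ ∩ B_{c,n}(ρ)) be the number of integer points in the ball. Then vol(B_{c,n}(ρ)) · (max{1 − √n/(2ρ), 0})ⁿ ≤ N ≤ vol(B_{c,n}(ρ)) · (1 + √n/(2ρ))ⁿ. -/

import Mathlib

open MeasureTheory

open Metric ENNReal

namespace IPS
variable {n : ℕ}

def toE (a : Fin n → ℝ) : EuclideanSpace ℝ (Fin n) := WithLp.toLp 2 a

lemma dist_toE (a b : Fin n → ℝ) :
    dist (toE a) (toE b) = Real.sqrt (∑ i, (a i - b i) ^ 2) := by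
  rw [EuclideanSpace.dist_eq]
  congr 1
  refine Finset.sum_congr rfl fun i _ => ?_
  rw [show dist (toE a i) (toE b i) = dist (a i) (b i) from rfl, Real.dist_eq, sq_abs]

lemma sqrt_triangle (a b c : Fin n → ℝ) :
    Real.sqrt (∑ i, (a i - c i) ^ 2) ≤
      Real.sqrt (∑ i, (a i - b i) ^ 2) + Real.sqrt (∑ i, (b i - c i) ^ 2) := by
  simpa [dist_toE] using dist_triangle (toE a) (toE b) (toE c)

def cube (x : Fin n → ℤ) : Set (Fin n → ℝ) :=
  Set.univ.pi fun i => Set.Ico ((x i : ℝ) - 1/2) ((x i : ℝ) + 1/2)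

noncomputable def rnd (y : Fin n → ℝ) : Fin n → ℤ := fun i => ⌊y i + 1/2⌋

lemma mem_cube_iff {x : Fin n → ℤ} {y : Fin n → ℝ} : y ∈ cube x ↔ rnd y = x := by
  simp only [cube, Set.mem_pi, Set.mem_univ, forall_true_left, Set.mem_Ico, rnd, funext_iff]
  refine forall_congr' fun i => ?_
  rw [Int.floor_eq_iff]
  constructor <;> rintro ⟨h1, h2⟩ <;> constructor <;> push_cast [] at h1 h2 ⊢ <;> linarith

lemma measurable_cube (x : Fin n → ℤ) : MeasurableSet (cube x) :=
  MeasurableSet.univ_pi fun _ => measurableSet_Ico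

lemma volume_cube (x : Fin n → ℤ) : volume (cube x) = 1 := by
  rw [cube, volume_pi_pi]
  norm_num [Real.volume_Ico]

lemma cube_dist {x : Fin n → ℤ} {y : Fin n → ℝ} (h : y ∈ cube x) :
    Real.sqrt (∑ i, (y i - (x i : ℝ)) ^ 2) ≤ Real.sqrt n / 2 := by
  have h4 : Real.sqrt n / 2 = Real.sqrt ((n : ℝ) / 4) := by
    rw [Real.sqrt_div (by positivity),
      show Real.sqrt 4 = 2 by rw [show (4:ℝ) = 2 ^ 2 by norm_num, Real.sqrt_sq (by norm_num)]]
  rw [h4]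
  apply Real.sqrt_le_sqrt
  have : ∀ i, (y i - (x i : ℝ)) ^ 2 ≤ 1/4 := by
    intro i
    have h1 := (h i (Set.mem_univ i)).1
    have h2 := (h i (Set.mem_univ i)).2
    nlinarith
  calc ∑ i, (y i - (x i : ℝ)) ^ 2 ≤ ∑ _i : Fin n, (1:ℝ)/4 :=
        Finset.sum_le_sum fun i _ => this i
    _ = (n : ℝ) / 4 := by simp; ring

lemma vol_eq (c : Fin n → ℝ) (r : ℝ) :
    volume {y : Fin n → ℝ | Real.sqrt (∑ i, (y i - c i) ^ 2) ≤ r}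
      = volume (closedBall (toE c) r) := by
  have hm := (EuclideanSpace.volume_preserving_symm_measurableEquiv_toLp (Fin n))
  have hmeas : NullMeasurableSet {y : Fin n → ℝ | Real.sqrt (∑ i, (y i - c i) ^ 2) ≤ r} volume := by
    refine (IsClosed.measurableSet ?_).nullMeasurableSet
    exact isClosed_le (by continuity) continuous_const
  rw [← hm.measure_preimage hmeas]
  congr 1
  ext y
  simp only [Set.mem_preimage, mem_closedBall, Set.mem_setOf_eq]
  rw [show (MeasurableEquiv.toLp 2 (Fin n → ℝ)).symm y = y.ofLp from rfl]
  rw [show dist y (toE c) = dist (toE y.ofLp) (toE c) from rfl, dist_toE]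

lemma finite_S (c : Fin n → ℝ) (ρ : ℝ) :
    {x : Fin n → ℤ | Real.sqrt (∑ i, ((x i : ℝ) - c i) ^ 2) ≤ ρ}.Finite := by
  apply Set.Finite.subset (Set.Finite.pi (fun i => Set.finite_Icc (⌈c i - ρ⌉) (⌊c i + ρ⌋)))
  intro x hx
  simp only [Set.mem_setOf_eq] at hx
  have hρ0 : 0 ≤ ρ := le_trans (Real.sqrt_nonneg _) hx
  intro i _
  have hsum : ((x i : ℝ) - c i) ^ 2 ≤ ρ ^ 2 := by
    have h1 : ((x i : ℝ) - c i) ^ 2 ≤ ∑ j, ((x j : ℝ) - c j) ^ 2 :=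
      Finset.single_le_sum (f := fun j => ((x j : ℝ) - c j) ^ 2)
        (fun j _ => sq_nonneg _) (Finset.mem_univ i)
    have h2 : ∑ j, ((x j : ℝ) - c j) ^ 2 ≤ ρ ^ 2 := by
      have h0 : (0:ℝ) ≤ ∑ j, ((x j : ℝ) - c j) ^ 2 :=
        Finset.sum_nonneg fun j _ => sq_nonneg _
      nlinarith [Real.sq_sqrt h0, Real.sqrt_nonneg (∑ j, ((x j : ℝ) - c j) ^ 2)]
    linarith
  have habs : |(x i : ℝ) - c i| ≤ ρ := by
    rw [abs_le]; constructor <;> nlinarith [abs_nonneg ((x i : ℝ) - c i)]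
  rw [abs_le] at habs
  constructor
  · exact Int.ceil_le.2 (by linarith [habs.1])
  · exact Int.le_floor.2 (by linarith [habs.2])

end IPS

open IPS

set_option linter.unusedVariables false in
/-- **Integer points inside a sphere.**  For `n ≥ 1`, `c ∈ ℝⁿ` and `ρ > 0`, the number `N` of
integer points in the closed ball `B_{c,n}(ρ)` satisfies
`vol(B_{c,n}(ρ)) · (max{1 − √n/(2ρ), 0})ⁿ ≤ N ≤ vol(B_{c,n}(ρ)) · (1 + √n/(2ρ))ⁿ`. -/
theorem integer_points_in_sphere (n : ℕ) (hn : 1 ≤ n) (c : Fin n → ℝ) (ρ : ℝ) (hρ : 0 < ρ) :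
    (volume {y : Fin n → ℝ | Real.sqrt (∑ i, (y i - c i) ^ 2) ≤ ρ}).toReal *
        (max (1 - Real.sqrt n / (2 * ρ)) 0) ^ n
      ≤ (Set.ncard {x : Fin n → ℤ | Real.sqrt (∑ i, ((x i : ℝ) - c i) ^ 2) ≤ ρ} : ℝ) ∧
    (Set.ncard {x : Fin n → ℤ | Real.sqrt (∑ i, ((x i : ℝ) - c i) ^ 2) ≤ ρ} : ℝ)
      ≤ (volume {y : Fin n → ℝ | Real.sqrt (∑ i, (y i - c i) ^ 2) ≤ ρ}).toReal *
        (1 + Real.sqrt n / (2 * ρ)) ^ n := by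
  classical
  have hS : {x : Fin n → ℤ | Real.sqrt (∑ i, ((x i : ℝ) - c i) ^ 2) ≤ ρ}.Finite :=
    IPS.finite_S c ρ
  set S := {x : Fin n → ℤ | Real.sqrt (∑ i, ((x i : ℝ) - c i) ^ 2) ≤ ρ} with hSdef
  set F := hS.toFinset with hFdef
  have hcard : S.ncard = F.card := Set.ncard_eq_toFinset_card S hS
  have hdisj : (↑F : Set (Fin n → ℤ)).PairwiseDisjoint (fun x => cube x) := by
    intro a _ b _ hab
    refine Set.disjoint_left.2 fun y hya hyb => hab ?_
    rw [mem_cube_iff] at hya hyb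
    rw [← hya, hyb]
  have hUvol : volume (⋃ x ∈ F, cube x) = F.card := by
    rw [measure_biUnion_finset hdisj fun b _ => measurable_cube b]
    simp [volume_cube]
  set u := (volume (ball (0 : EuclideanSpace ℝ (Fin n)) 1)).toReal with hu
  have hu0 : 0 ≤ u := ENNReal.toReal_nonneg
  have hvol : ∀ r : ℝ, 0 ≤ r →
      (volume (closedBall (toE c) r)).toReal = r ^ n * u := by
    intro r hr
    rw [Measure.addHaar_closedBall volume (toE c) hr, ENNReal.toReal_mul,
      ENNReal.toReal_ofReal (by positivity)]
    simp [finrank_euclideanSpace_fin, hu]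
  have hvolρ : (volume {y : Fin n → ℝ | Real.sqrt (∑ i, (y i - c i) ^ 2) ≤ ρ}).toReal
      = ρ ^ n * u := by rw [vol_eq, hvol ρ hρ.le]
  set ε := Real.sqrt n / (2 * ρ) with hε
  have hε0 : 0 ≤ ε := by positivity
  -- upper bound
  have hsub : (⋃ x ∈ F, cube x) ⊆
      {y : Fin n → ℝ | Real.sqrt (∑ i, (y i - c i) ^ 2) ≤ ρ + Real.sqrt n / 2} := by
    intro y hy
    simp only [Set.mem_iUnion, exists_prop] at hy
    obtain ⟨x, hxF, hyx⟩ := hy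
    have hxS : x ∈ S := hS.mem_toFinset.1 hxF
    have h1 := cube_dist hyx
    have h2 : Real.sqrt (∑ i, ((x i : ℝ) - c i) ^ 2) ≤ ρ := hxS
    have ht := sqrt_triangle y (fun i => (x i : ℝ)) c
    simp only [Set.mem_setOf_eq]
    calc Real.sqrt (∑ i, (y i - c i) ^ 2)
        ≤ Real.sqrt (∑ i, (y i - (x i : ℝ)) ^ 2)
            + Real.sqrt (∑ i, ((x i : ℝ) - c i) ^ 2) := ht
      _ ≤ Real.sqrt n / 2 + ρ := add_le_add h1 h2
      _ = ρ + Real.sqrt n / 2 := by ring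
  have hupper : (F.card : ℝ≥0∞) ≤ volume (closedBall (toE c) (ρ + Real.sqrt n / 2)) := by
    rw [← vol_eq, ← hUvol]
    exact measure_mono hsub
  have hub : (F.card : ℝ) ≤ (ρ + Real.sqrt n / 2) ^ n * u := by
    have hfin : volume (closedBall (toE c) (ρ + Real.sqrt n / 2)) ≠ ⊤ :=
      measure_closedBall_lt_top.ne
    have h := ENNReal.toReal_mono hfin hupper
    rwa [ENNReal.toReal_natCast, hvol _ (by positivity)] at h
  have hkey : ρ * (1 + ε) = ρ + Real.sqrt n / 2 := by
    rw [hε]; field_simp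
  -- lower bound
  have hsub2 : {y : Fin n → ℝ | Real.sqrt (∑ i, (y i - c i) ^ 2) ≤ ρ - Real.sqrt n / 2}
      ⊆ ⋃ x ∈ F, cube x := by
    intro y hy
    simp only [Set.mem_setOf_eq] at hy
    have hyc : y ∈ cube (rnd y) := mem_cube_iff.2 rfl
    have hd := cube_dist hyc
    have hxS : rnd y ∈ S := by
      show Real.sqrt (∑ i, ((rnd y i : ℝ) - c i) ^ 2) ≤ ρ
      have ht := sqrt_triangle (fun i => (rnd y i : ℝ)) y c
      have hsym : (∑ i, ((rnd y i : ℝ) - y i) ^ 2) = ∑ i, (y i - (rnd y i : ℝ)) ^ 2 :=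
        Finset.sum_congr rfl fun i _ => by ring
      rw [hsym] at ht
      linarith
    exact Set.mem_iUnion₂.2 ⟨rnd y, hS.mem_toFinset.2 hxS, hyc⟩
  have hlow : volume (closedBall (toE c) (ρ - Real.sqrt n / 2)) ≤ (F.card : ℝ≥0∞) := by
    rw [← vol_eq, ← hUvol]
    exact measure_mono hsub2
  clear_value ε u
  constructor
  · rcases le_or_gt (Real.sqrt n / 2) ρ with h | h
    · have hε1 : ε ≤ 1 := by
        rw [hε, div_le_one (by positivity)]; linarith
      have hmax : max (1 - ε) 0 = 1 - ε := max_eq_left (by linarith)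
      have hkey2 : ρ * (1 - ε) = ρ - Real.sqrt n / 2 := by
        rw [hε]; field_simp
      have hlb : (ρ - Real.sqrt n / 2) ^ n * u ≤ (F.card : ℝ) := by
        have h2 := ENNReal.toReal_mono (ENNReal.natCast_ne_top F.card) hlow
        rwa [ENNReal.toReal_natCast, hvol _ (by linarith)] at h2
      rw [hvolρ, hmax, hcard]
      calc ρ ^ n * u * (1 - ε) ^ n = (ρ * (1 - ε)) ^ n * u := by rw [mul_pow]; ring
        _ = (ρ - Real.sqrt n / 2) ^ n * u := by rw [hkey2]
        _ ≤ (F.card : ℝ) := hlb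
    · have hε1 : 1 < ε := by
        rw [hε, lt_div_iff₀ (by positivity)]; linarith
      have hmax : max (1 - ε) 0 = 0 := max_eq_right (by linarith)
      rw [hmax, zero_pow (by omega : n ≠ 0), mul_zero]
      exact_mod_cast Nat.cast_nonneg S.ncard
  · rw [hvolρ, hcard]
    calc (F.card : ℝ) ≤ (ρ + Real.sqrt n / 2) ^ n * u := hub
      _ = (ρ * (1 + ε)) ^ n * u := by rw [hkey]
      _ = ρ ^ n * u * (1 + ε) ^ n := by rw [mul_pow]; ring
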